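/- Let p ≥ 3 be an odd integer. Every ρ-invariant monomial m of R of degree at least p+1 can be written as a product m = m_1·m_2 of two ρ-invariant monomials m_1, m_2 whose degrees are both strictly smaller than the degree of m. -/

import Mathlib

open MvPolynomial

noncomputable section

abbrev DVar (r s : ℕ) := (Fin r ⊕ Fin r) ⊕ (Fin s ⊕ Fin s)

def dswap {r s : ℕ} : DVar r s → DVar r s
  | .inl (.inl i) => .inl (.inr i)
  | .inl (.inr i) => .inl (.inl i)
  | .inr (.inl j) => .inr (.inr j)
  | .inr (.inr j) => .inr (.inl j)

def sigmaMap (F : Type*) [Field F] (r s : ℕ) :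
    MvPolynomial (DVar r s) F →ₐ[F] MvPolynomial (DVar r s) F :=
  MvPolynomial.rename dswap

def rhoCoeff {F : Type*} [Field F] {r s : ℕ} (lam : Fin r → F) : DVar r s → F
  | .inl (.inl i) => lam i
  | .inl (.inr i) => (lam i)⁻¹
  | .inr _ => 1

def rhoMap (F : Type*) [Field F] (r s : ℕ) (lam : Fin r → F) :
    MvPolynomial (DVar r s) F →ₐ[F] MvPolynomial (DVar r s) F :=
  MvPolynomial.aeval fun v => MvPolynomial.C (rhoCoeff lam v) * MvPolynomial.X v

def HilbertIdeal (F : Type*) [Field F] (r s : ℕ) (lam : Fin r → F) :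
    Ideal (MvPolynomial (DVar r s) F) :=
  Ideal.span {f | sigmaMap F r s f = f ∧ rhoMap F r s lam f = f ∧ constantCoeff f = 0}

def IsMonomial {σ F : Type*} [CommSemiring F] (f : MvPolynomial σ F) : Prop :=
  ∃ d : σ →₀ ℕ, f = monomial d 1

def GSet (F : Type*) [Field F] (r s p : ℕ) (lam : Fin r → F) :
    Set (MvPolynomial (DVar r s) F) :=
  {f | ∃ m, IsMonomial m ∧ rhoMap F r s lam m = m ∧ sigmaMap F r s m ≠ m ∧
      m.totalDegree ≤ p ∧ f = m + sigmaMap F r s m} ∪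
  {f | ∃ (m : MvPolynomial (DVar r s) F) (v : DVar r s), IsMonomial m ∧ rhoMap F r s lam m = m ∧ m.totalDegree ≤ p ∧
      X v ∣ m ∧ f = X v * m} ∪
  {f | (∃ i : Fin r, f = X (Sum.inl (Sum.inl i)) * X (Sum.inl (Sum.inr i))) ∨
       (∃ j : Fin s, f = X (Sum.inr (Sum.inl j)) * X (Sum.inr (Sum.inr j)))}

def lmExp {σ F : Type*} [CommSemiring F] (mo : MonomialOrder σ) (f : MvPolynomial σ F) :
    σ →₀ ℕ :=
  mo.toSyn.symm (f.support.sup fun d => mo.toSyn d)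

/-- rhoMap on a monomial. -/
lemma rhoMap_monomial {F : Type*} [Field F] {r s : ℕ} (lam : Fin r → F) (d : DVar r s →₀ ℕ) :
    rhoMap F r s lam (monomial d 1) =
      C (d.prod fun v n => rhoCoeff lam v ^ n) * monomial d 1 := by
  rw [rhoMap, aeval_monomial, map_one, one_mul]
  have : (d.prod fun v n => (C (rhoCoeff lam v) * X v : MvPolynomial (DVar r s) F) ^ n)
      = (d.prod fun v n => (C (rhoCoeff lam v ^ n) : MvPolynomial (DVar r s) F))
        * d.prod fun v n => (X v : MvPolynomial (DVar r s) F) ^ n := by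
    rw [← Finsupp.prod_mul]
    exact Finsupp.prod_congr fun v _ => by rw [mul_pow, map_pow]
  rw [this, monomial_eq, C_1, one_mul]
  congr 1
  rw [Finsupp.prod, Finsupp.prod, map_prod]

lemma rhoMap_monomial_invariant_iff {F : Type*} [Field F] {r s : ℕ} (lam : Fin r → F)
    (d : DVar r s →₀ ℕ) :
    rhoMap F r s lam (monomial d 1) = monomial d 1 ↔
      (d.prod fun v n => rhoCoeff lam v ^ n) = 1 := by
  rw [rhoMap_monomial]
  constructor
  · intro h
    rw [C_mul_monomial, mul_one] at h
    rcases (monomial_eq_monomial_iff d d _ (1:F)).mp h with ⟨-, h'⟩ | ⟨-, h'⟩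
    · exact h'
    · exact absurd h' one_ne_zero
  · intro h; rw [h, C_1, one_mul]

lemma prod_map_toMultiset {α β : Type*} [DecidableEq α] [CommMonoid β] (f : α →₀ ℕ) (g : α → β) :
    (f.toMultiset.map g).prod = f.prod fun a n => g a ^ n := by
  rw [Finsupp.toMultiset_map, Finsupp.prod_toMultiset,
    Finsupp.prod_mapDomain_index (fun _ => pow_zero _) (fun _ _ _ => pow_add _ _ _)]

lemma list_prod_pow_eq_one {F : Type*} [CommMonoid F] (t : List F) (p : ℕ)
    (h : ∀ x ∈ t, x ^ p = 1) : t.prod ^ p = 1 := by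
  induction t with
  | nil => simp
  | cons a t ih =>
    simp only [List.prod_cons, mul_pow, h a (by simp), one_mul]
    exact ih fun x hx => h x (List.mem_cons_of_mem _ hx)

lemma take_eq_take_append {α : Type*} (l : List α) (i j : ℕ) (hij : i < j) :
    l.take j = l.take i ++ (l.drop i).take (j - i) := by
  have h1 : (l.drop i).take (j - i) ++ l.drop j = l.drop i := by
    have := List.drop_take_append_drop l i (j - i)
    rwa [Nat.add_sub_cancel' (le_of_lt hij)] at this
  have h2 : l.take j ++ l.drop j = (l.take i ++ (l.drop i).take (j - i)) ++ l.drop j := by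
    rw [List.take_append_drop, List.append_assoc, h1, List.take_append_drop]
  exact List.append_cancel_right h2

/-- For `p ≥ 3` an odd integer, every `ρ`-invariant monomial of degree at least
`p+1` is a product of two `ρ`-invariant monomials of strictly smaller degree. -/
theorem rho_invariant_monomial_decomposition
    {F : Type*} [Field F] [CharP F 2] {r s p : ℕ} (hp : 3 ≤ p) (hodd : Odd p)
    (ζ : F) (hζ : IsPrimitiveRoot ζ p)
    (lam : Fin r → F) (hlam : ∀ i, lam i ^ p = 1 ∧ lam i ≠ 1)
    (m : MvPolynomial (DVar r s) F) (hm : IsMonomial m) (hρ : rhoMap F r s lam m = m)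
    (hdeg : p + 1 ≤ m.totalDegree) :
    ∃ m₁ m₂ : MvPolynomial (DVar r s) F,
      IsMonomial m₁ ∧ IsMonomial m₂ ∧
      rhoMap F r s lam m₁ = m₁ ∧ rhoMap F r s lam m₂ = m₂ ∧
      m = m₁ * m₂ ∧
      m₁.totalDegree < m.totalDegree ∧ m₂.totalDegree < m.totalDegree := by
  classical
  obtain ⟨d, rfl⟩ := hm
  set K : DVar r s → F := rhoCoeff lam with hK
  -- every coefficient is a p-th root of unity
  have hKpow : ∀ v : DVar r s, K v ^ p = 1 := by
    rintro ((i | i) | (j | j))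
    · exact (hlam i).1
    · show (lam i)⁻¹ ^ p = 1
      rw [inv_pow, (hlam i).1, inv_one]
    · exact one_pow p
    · exact one_pow p
  have hP : (d.prod fun v n => K v ^ n) = 1 :=
    (rhoMap_monomial_invariant_iff lam d).mp hρ
  -- the list of variables of m
  set l : List (DVar r s) := d.toMultiset.toList with hl
  have hcoel : (l : Multiset (DVar r s)) = d.toMultiset := Multiset.coe_toList _
  have hlen : l.length = d.toMultiset.card := Multiset.length_toList _
  have hsum : (monomial d (1:F)).totalDegree = l.length := by
    rw [totalDegree_monomial d (one_ne_zero : (1:F) ≠ 0), hlen, Finsupp.card_toMultiset]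
    rfl
  have hL : p + 1 ≤ l.length := by rw [← hsum]; exact hdeg
  have hlmem : ∀ v ∈ l, K v ^ p = 1 := fun v _ => hKpow v
  -- partial products
  set Q : ℕ → F := fun k => ((l.take k).map K).prod with hQ
  have hQpow : ∀ k, Q k ^ p = 1 := by
    intro k
    apply list_prod_pow_eq_one
    intro x hx
    obtain ⟨v, hv, rfl⟩ := List.mem_map.mp hx
    exact hKpow v
  have hQne : ∀ k, Q k ≠ 0 := by
    intro k h0
    have := hQpow k
    rw [h0, zero_pow (by omega : p ≠ 0)] at this
    exact zero_ne_one this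
  -- pigeonhole on partial products
  have hpig : ∃ a : Fin (p+1), ∃ b : Fin (p+1), a ≠ b ∧ Q a = Q b := by
    have hcard : ((Polynomial.nthRoots p (1:F)).toFinset).card < (Finset.univ : Finset (Fin (p+1))).card := by
      calc ((Polynomial.nthRoots p (1:F)).toFinset).card
          ≤ Multiset.card (Polynomial.nthRoots p (1:F)) := Multiset.toFinset_card_le _
        _ ≤ p := Polynomial.card_nthRoots p 1
        _ < (Finset.univ : Finset (Fin (p+1))).card := by simp
    obtain ⟨a, _, b, _, hab, hQab⟩ :=
      Finset.exists_ne_map_eq_of_card_lt_of_maps_to hcard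
        (f := fun k : Fin (p+1) => Q k)
        (fun k _ => by
          rw [Finset.mem_coe, Multiset.mem_toFinset, Polynomial.mem_nthRoots (by omega : 0 < p)]
          exact hQpow k)
    exact ⟨a, b, hab, hQab⟩
  obtain ⟨a, b, hab, hQab⟩ := hpig
  -- wlog i < j
  obtain ⟨i, j, hij, hjp, hQij⟩ : ∃ i j : ℕ, i < j ∧ j ≤ p ∧ Q i = Q j := by
    rcases hab.lt_or_gt with h | h
    · exact ⟨a, b, h, by omega, hQab⟩
    · exact ⟨b, a, h, by omega, hQab.symm⟩
  have hjL : j < l.length := by omega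
  -- slice of the list with product 1
  set slice : List (DVar r s) := (l.drop i).take (j - i) with hslice
  have htake : l.take j = l.take i ++ slice := take_eq_take_append l i j hij
  have hsliceprod : (slice.map K).prod = 1 := by
    have : Q j = Q i * (slice.map K).prod := by
      rw [hQ]
      simp only [htake, List.map_append, List.prod_append]
    rw [← hQij] at this
    have h' : Q i * (slice.map K).prod = Q i * 1 := by rw [mul_one]; exact this.symm
    exact mul_left_cancel₀ (hQne i) h'
  have hslicelen : slice.length = j - i := by
    rw [hslice, List.length_take, List.length_drop]
    omega
  -- the complementary list
  set rest : List (DVar r s) := l.take i ++ l.drop j with hrest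
  have hrestlen : rest.length = i + (l.length - j) := by
    rw [hrest, List.length_append, List.length_take, List.length_drop]
    omega
  have hdecomp : l = l.take i ++ slice ++ l.drop j := by
    have h1 : slice ++ l.drop j = l.drop i := by
      have := List.drop_take_append_drop l i (j - i)
      rwa [Nat.add_sub_cancel' (le_of_lt hij)] at this
    rw [List.append_assoc, h1, List.take_append_drop]
  -- the two exponent vectors
  set d₁ : DVar r s →₀ ℕ := Multiset.toFinsupp (slice : Multiset (DVar r s)) with hd₁
  set d₂ : DVar r s →₀ ℕ := Multiset.toFinsupp (rest : Multiset (DVar r s)) with hd₂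
  have hd₁M : d₁.toMultiset = (slice : Multiset (DVar r s)) := Multiset.toFinsupp_toMultiset _
  have hd₂M : d₂.toMultiset = (rest : Multiset (DVar r s)) := Multiset.toFinsupp_toMultiset _
  have hadd : d₁ + d₂ = d := by
    have hmulti : (slice : Multiset (DVar r s)) + (rest : Multiset (DVar r s)) = d.toMultiset := by
      have h1 : ((l.take i ++ slice ++ l.drop j : List (DVar r s)) : Multiset (DVar r s))
          = (l : Multiset (DVar r s)) :=
        congrArg (fun t : List (DVar r s) => (t : Multiset (DVar r s))) hdecomp.symm
      rw [← hcoel, ← h1, hrest, ← Multiset.coe_add, ← Multiset.coe_add, ← Multiset.coe_add,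
        add_left_comm, add_assoc]
    rw [hd₁, hd₂, ← map_add, hmulti, Finsupp.toMultiset_toFinsupp]
  -- product condition for d₁
  have hP₁ : (d₁.prod fun v n => K v ^ n) = 1 := by
    rw [← prod_map_toMultiset d₁ K, hd₁M]
    rw [show ((slice : Multiset (DVar r s)).map K) = ((slice.map K : List F) : Multiset F) from rfl]
    rw [Multiset.prod_coe]
    exact hsliceprod
  have hP₂ : (d₂.prod fun v n => K v ^ n) = 1 := by
    have hsplit : (d.prod fun v n => K v ^ n)
        = (d₁.prod fun v n => K v ^ n) * (d₂.prod fun v n => K v ^ n) := by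
      rw [← hadd]
      exact Finsupp.prod_add_index' (fun _ => pow_zero _) (fun _ _ _ => pow_add _ _ _)
    rw [hP, hP₁, one_mul] at hsplit
    exact hsplit.symm
  refine ⟨monomial d₁ 1, monomial d₂ 1, ⟨d₁, rfl⟩, ⟨d₂, rfl⟩,
    (rhoMap_monomial_invariant_iff lam d₁).mpr hP₁,
    (rhoMap_monomial_invariant_iff lam d₂).mpr hP₂, ?_, ?_, ?_⟩
  · rw [monomial_mul, mul_one, hadd]
  · rw [hsum, totalDegree_monomial d₁ (one_ne_zero : (1:F) ≠ 0)]
    have : (d₁.sum fun _ e => e) = slice.length := by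
      have := Finsupp.card_toMultiset d₁
      rw [hd₁M, Multiset.coe_card] at this
      exact this.symm
    rw [this, hslicelen]
    omega
  · rw [hsum, totalDegree_monomial d₂ (one_ne_zero : (1:F) ≠ 0)]
    have : (d₂.sum fun _ e => e) = rest.length := by
      have := Finsupp.card_toMultiset d₂
      rw [hd₂M, Multiset.coe_card] at this
      exact this.symm
    rw [this, hrestlen]
    omega
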